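/- Let 0 < α < 1, τ > 0, N a positive integer and T := N·τ. Define b_i := ∫_{iτ}^{(i+1)τ} s^{−α} ds = (τ^{1−α}/(1−α))·[(i+1)^{1−α} − i^{1−α}] for i ≥ 0. Then for every real sequence g₁, g₂, …, g_N and every real number q̂, one has Σ_{n=1}^{N} [b₀·g_n − Σ_{i=1}^{n−1}(b_{n−i−1} − b_{n−i})·g_i − b_{n−1}·q̂]·g_n ≥ (T^{−α}/2)·τ·Σ_{n=1}^{N} g_n² − (T^{1−α}/(2(1−α)))·q̂². -/

import Mathlib

open Real in
lemma aux_lower_stmt10 {β x : ℝ} (hβ0 : 0 < β) (hβ1 : β < 1) (hx : 0 ≤ x) :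
    β * (x + 1) ^ (β - 1) ≤ (x + 1) ^ β - x ^ β := by
  have hx1 : (0:ℝ) < x + 1 := by linarith
  have hbern := rpow_one_add_le_one_add_mul_self
      (s := -(1/(x+1))) (by rw [neg_le, neg_neg]; rw [div_le_one hx1]; linarith)
      hβ0.le hβ1.le
  have h1 : (1 : ℝ) + -(1/(x+1)) = x / (x+1) := by field_simp; ring
  rw [h1] at hbern
  have h2 : (x / (x+1)) ^ β = x ^ β / (x+1) ^ β := Real.div_rpow hx hx1.le β
  rw [h2] at hbern
  have hp : (0:ℝ) < (x+1) ^ β := Real.rpow_pos_of_pos hx1 β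
  have h3 : x ^ β ≤ (1 + β * -(1/(x+1))) * (x+1) ^ β := by
    rw [div_le_iff₀ hp] at hbern; linarith
  have h4 : (x+1) ^ (β - 1) = (x+1) ^ β / (x+1) := by
    rw [Real.rpow_sub hx1, Real.rpow_one]
  rw [h4]
  have : (1 + β * -(1/(x+1))) * (x+1) ^ β = (x+1)^β - β * ((x+1)^β / (x+1)) := by
    field_simp; ring
  linarith [h3, this ▸ h3]

open Real in
lemma aux_concave_stmt10 {β x : ℝ} (hβ0 : 0 < β) (hβ1 : β < 1) (hx : 0 ≤ x) :
    (x + 2) ^ β - (x + 1) ^ β ≤ (x + 1) ^ β - x ^ β := by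
  have h := (Real.concaveOn_rpow hβ0.le hβ1.le).2
    (Set.mem_Ici.2 hx) (Set.mem_Ici.2 (by linarith : (0:ℝ) ≤ x + 2))
    (by norm_num : (0:ℝ) ≤ 1/2) (by norm_num : (0:ℝ) ≤ 1/2) (by norm_num)
  simp only [smul_eq_mul] at h
  have hmid : (1/2 : ℝ) * x + 1/2 * (x + 2) = x + 1 := by ring
  rw [hmid] at h
  linarith

/-- Sign property of the L1 coefficients (Lemma 4.2): with
`bᵢ = (τ^{1-α}/(1-α))[(i+1)^{1-α} - i^{1-α}]`, for any sequence `g` and number `q̂`,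
`∑_{n=1}^{N} [b₀ gₙ - ∑_{i=1}^{n-1}(b_{n-i-1} - b_{n-i}) gᵢ - b_{n-1} q̂] gₙ
  ≥ (T^{-α}/2) τ ∑_{n=1}^{N} gₙ² - (T^{1-α}/(2(1-α))) q̂²`. -/
theorem stmt_10 (α τ : ℝ) (hα : 0 < α) (hα1 : α < 1) (hτ : 0 < τ)
    (N : ℕ) (hN : 0 < N) (T : ℝ) (hT : T = N * τ)
    (b : ℕ → ℝ)
    (hb : ∀ i : ℕ, b i = τ ^ (1 - α) / (1 - α) * (((i : ℝ) + 1) ^ (1 - α) - (i : ℝ) ^ (1 - α)))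
    (g : ℕ → ℝ) (q : ℝ) :
    ∑ n ∈ Finset.Icc 1 N,
        (b 0 * g n - (∑ i ∈ Finset.Icc 1 (n - 1), (b (n - i - 1) - b (n - i)) * g i)
          - b (n - 1) * q) * g n
      ≥ T ^ (-α) / 2 * τ * ∑ n ∈ Finset.Icc 1 N, (g n) ^ 2
        - T ^ (1 - α) / (2 * (1 - α)) * q ^ 2 := by
  have hβ0 : (0:ℝ) < 1 - α := by linarith
  have hβ1 : (1:ℝ) - α < 1 := by linarith
  have hc : (0:ℝ) < τ ^ (1 - α) / (1 - α) := by
    apply div_pos (Real.rpow_pos_of_pos hτ _) hβ0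
  -- basic properties of b
  have hb0 : ∀ i, 0 ≤ b i := by
    intro i
    rw [hb i]
    apply mul_nonneg hc.le
    have : (i:ℝ) ^ (1-α) ≤ ((i:ℝ)+1) ^ (1-α) :=
      Real.rpow_le_rpow (Nat.cast_nonneg i) (by linarith) hβ0.le
    linarith
  have hbmono : ∀ i, b (i+1) ≤ b i := by
    intro i
    rw [hb i, hb (i+1)]
    apply mul_le_mul_of_nonneg_left _ hc.le
    push_cast
    have := aux_concave_stmt10 (x := (i:ℝ)) hβ0 hβ1 (Nat.cast_nonneg i)
    have e : ((i:ℝ) + 1 + 1) = (i:ℝ) + 2 := by ring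
    rw [e]
    linarith
  have hbanti : ∀ i j : ℕ, i ≤ j → b j ≤ b i :=
    fun i j h => antitone_nat_of_succ_le hbmono h
  have hTpos : (0:ℝ) < T := by
    rw [hT]; positivity
  -- lower bound for b (N-1)
  have hblow : τ * T ^ (-α) ≤ b (N-1) := by
    rw [hb (N-1)]
    have hcast : ((N-1 : ℕ):ℝ) = (N:ℝ) - 1 := by
      have : (1:ℕ) ≤ N := hN
      push_cast [this]; ring
    rw [hcast, show ((N:ℝ) - 1 + 1) = (N:ℝ) from by ring]
    have hx : (0:ℝ) ≤ (N:ℝ) - 1 := by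
      have h1N : (1:ℝ) ≤ (N:ℝ) := by exact_mod_cast hN
      linarith
    have key := aux_lower_stmt10 (x := (N:ℝ) - 1) hβ0 hβ1 hx
    have e : ((N:ℝ) - 1 + 1) = (N:ℝ) := by ring
    rw [e] at key
    have e2 : (1 - α - 1) = -α := by ring
    rw [e2] at key
    -- τ * T^(-α) = τ^(1-α) * N^(-α)
    have hτT : τ * T ^ (-α) = τ ^ (1-α) * (N:ℝ) ^ (-α) := by
      rw [hT, Real.mul_rpow (Nat.cast_nonneg N) hτ.le]
      rw [show τ ^ (1-α) = τ ^ (1:ℝ) * τ ^ (-α) by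
        rw [← Real.rpow_add hτ]; ring_nf]
      rw [Real.rpow_one]; ring
    rw [hτT]
    calc τ ^ (1-α) * (N:ℝ) ^ (-α)
        = τ ^ (1-α) / (1-α) * ((1-α) * (N:ℝ) ^ (-α)) := by field_simp
      _ ≤ τ ^ (1-α) / (1-α) * ((N:ℝ) ^ (1-α) - ((N:ℝ)-1) ^ (1-α)) := by
          apply mul_le_mul_of_nonneg_left _ hc.le
          exact key
  -- b (N-n) ≥ τ T^(-α) for n in Icc 1 N
  have hbNn : ∀ n ∈ Finset.Icc 1 N, τ * T ^ (-α) ≤ b (N-n) := by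
    intro n hn
    rw [Finset.mem_Icc] at hn
    exact le_trans hblow (hbanti _ _ (by omega))
  -- interval conversion
  have hIcc : ∀ n : ℕ, Finset.Icc 1 (n-1) = Finset.Ico 1 n := by
    intro n; ext x; simp only [Finset.mem_Icc, Finset.mem_Ico]; omega
  -- telescoping sum 1
  have hsum1 : ∀ n, 1 ≤ n → ∑ i ∈ Finset.Icc 1 (n-1), (b (n-i-1) - b (n-i)) = b 0 - b (n-1) := by
    intro n hn
    rw [hIcc n, Finset.sum_Ico_eq_sum_range]
    have : ∀ k ∈ Finset.range (n-1), b (n-(1+k)-1) - b (n-(1+k))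
        = (fun j => b j - b (j+1)) ((n-1) - 1 - k) := by
      intro k hk
      rw [Finset.mem_range] at hk
      simp only []
      congr 2 <;> omega
    rw [Finset.sum_congr rfl this, Finset.sum_range_reflect (fun j => b j - b (j+1)) (n-1),
      Finset.sum_range_sub' b]
  -- telescoping sum 2
  have htel : ∑ k ∈ Finset.range N, (((k:ℝ)+1) ^ (1-α) - (k:ℝ) ^ (1-α)) = (N:ℝ) ^ (1-α) := by
    have h := Finset.sum_range_sub (fun j : ℕ => ((j:ℝ)) ^ (1-α)) N
    push_cast at h
    rw [Real.zero_rpow (by linarith : (1:ℝ) - α ≠ 0), sub_zero] at h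
    exact h
  have hsum2 : ∑ n ∈ Finset.Icc 1 N, b (n-1) = T ^ (1-α) / (1-α) := by
    have h1 : Finset.Icc 1 N = Finset.Ico 1 (N+1) := by
      ext x; simp [Nat.lt_succ_iff]
    rw [h1, Finset.sum_Ico_eq_sum_range]
    simp only [Nat.add_sub_cancel, Nat.add_sub_cancel_left]
    calc ∑ x ∈ Finset.range N, b x
        = ∑ x ∈ Finset.range N, (τ ^ (1-α) / (1-α) * (((x:ℝ)+1) ^ (1-α) - (x:ℝ) ^ (1-α))) :=
          Finset.sum_congr rfl fun x _ => hb x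
      _ = τ ^ (1-α) / (1-α) * ∑ x ∈ Finset.range N, (((x:ℝ)+1) ^ (1-α) - (x:ℝ) ^ (1-α)) :=
          (Finset.mul_sum _ _ _).symm
      _ = τ ^ (1-α) / (1-α) * (N:ℝ) ^ (1-α) := by rw [htel]
      _ = T ^ (1-α) / (1-α) := by
          rw [hT, Real.mul_rpow (Nat.cast_nonneg N) hτ.le]; ring
  -- double sum swap
  have hswap : ∑ n ∈ Finset.Icc 1 N, ∑ i ∈ Finset.Icc 1 (n-1), (b (n-i-1) - b (n-i)) * g i ^ 2
      = ∑ i ∈ Finset.Icc 1 N, (b 0 - b (N-i)) * g i ^ 2 := by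
    have h1 : Finset.Icc 1 N = Finset.Ico 1 (N+1) := by
      ext x; simp [Nat.lt_succ_iff]
    calc ∑ n ∈ Finset.Icc 1 N, ∑ i ∈ Finset.Icc 1 (n-1), (b (n-i-1) - b (n-i)) * g i ^ 2
        = ∑ n ∈ Finset.Ico 1 (N+1), ∑ i ∈ Finset.Ico 1 n, (b (n-i-1) - b (n-i)) * g i ^ 2 := by
          rw [h1]
          exact Finset.sum_congr rfl fun n _ => by rw [hIcc n]
      _ = ∑ i ∈ Finset.Ico 1 (N+1), ∑ n ∈ Finset.Ico (i+1) (N+1), (b (n-i-1) - b (n-i)) * g i ^ 2 := by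
          apply Finset.sum_comm'
          intro n i
          simp only [Finset.mem_Ico]
          omega
      _ = ∑ i ∈ Finset.Icc 1 N, (b 0 - b (N-i)) * g i ^ 2 := by
          rw [← h1]
          apply Finset.sum_congr rfl
          intro i hi
          rw [Finset.mem_Icc] at hi
          rw [Finset.sum_Ico_eq_sum_range, ← Finset.sum_mul]
          congr 1
          have : ∀ k ∈ Finset.range (N+1-(i+1)), b (i+1+k-i-1) - b (i+1+k-i)
              = (fun j => b j - b (j+1)) k := by
            intro k _
            simp only []
            congr 2 <;> omega
          rw [Finset.sum_congr rfl this, Finset.sum_range_sub' b]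
          congr 2
          omega
  -- nonnegativity of differences
  have hΔ : ∀ n i : ℕ, 1 ≤ i → i ≤ n - 1 → 1 ≤ n → 0 ≤ b (n-i-1) - b (n-i) := by
    intro n i h1 h2 h3
    obtain ⟨k, hk⟩ : ∃ k, n - i = k + 1 := ⟨n-i-1, by omega⟩
    rw [hk]
    simp only [Nat.add_sub_cancel]
    linarith [hbmono k]
  -- Step A: termwise lower bound
  have stepA : ∑ n ∈ Finset.Icc 1 N,
      (b 0 * g n ^ 2 - (∑ i ∈ Finset.Icc 1 (n-1), (b (n-i-1) - b (n-i)) * ((g i ^ 2 + g n ^ 2)/2))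
        - b (n-1) * ((q ^ 2 + g n ^ 2)/2))
      ≤ ∑ n ∈ Finset.Icc 1 N,
        (b 0 * g n - (∑ i ∈ Finset.Icc 1 (n - 1), (b (n - i - 1) - b (n - i)) * g i)
          - b (n - 1) * q) * g n := by
    apply Finset.sum_le_sum
    intro n hn
    rw [Finset.mem_Icc] at hn
    have hA : (∑ i ∈ Finset.Icc 1 (n-1), (b (n-i-1) - b (n-i)) * g i) * g n
        ≤ ∑ i ∈ Finset.Icc 1 (n-1), (b (n-i-1) - b (n-i)) * ((g i ^ 2 + g n ^ 2)/2) := by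
      rw [Finset.sum_mul]
      apply Finset.sum_le_sum
      intro i hi
      rw [Finset.mem_Icc] at hi
      have hd := hΔ n i hi.1 hi.2 hn.1
      have h2 : g i * g n ≤ (g i ^ 2 + g n ^ 2)/2 := by nlinarith [sq_nonneg (g i - g n)]
      calc (b (n-i-1) - b (n-i)) * g i * g n = (b (n-i-1) - b (n-i)) * (g i * g n) := by ring
        _ ≤ (b (n-i-1) - b (n-i)) * ((g i ^ 2 + g n ^ 2)/2) := by
            exact mul_le_mul_of_nonneg_left h2 hd
    have hq : b (n-1) * q * g n ≤ b (n-1) * ((q ^ 2 + g n ^ 2)/2) := by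
      have h2 : q * g n ≤ (q ^ 2 + g n ^ 2)/2 := by nlinarith [sq_nonneg (q - g n)]
      calc b (n-1) * q * g n = b (n-1) * (q * g n) := by ring
        _ ≤ b (n-1) * ((q ^ 2 + g n ^ 2)/2) := mul_le_mul_of_nonneg_left h2 (hb0 _)
    have expand : (b 0 * g n - (∑ i ∈ Finset.Icc 1 (n - 1), (b (n - i - 1) - b (n - i)) * g i)
          - b (n - 1) * q) * g n
        = b 0 * g n ^ 2
          - (∑ i ∈ Finset.Icc 1 (n-1), (b (n-i-1) - b (n-i)) * g i) * g n
          - b (n-1) * q * g n := by ring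
    rw [expand]
    linarith
  -- Step B: compute the lower-bound sum
  have stepB : ∑ n ∈ Finset.Icc 1 N,
      (b 0 * g n ^ 2 - (∑ i ∈ Finset.Icc 1 (n-1), (b (n-i-1) - b (n-i)) * ((g i ^ 2 + g n ^ 2)/2))
        - b (n-1) * ((q ^ 2 + g n ^ 2)/2))
      = ∑ n ∈ Finset.Icc 1 N, b (N-n) / 2 * g n ^ 2 - T ^ (1-α) / (2*(1-α)) * q ^ 2 := by
    have hE : ∀ n ∈ Finset.Icc 1 N,
        b 0 * g n ^ 2 - (∑ i ∈ Finset.Icc 1 (n-1), (b (n-i-1) - b (n-i)) * ((g i ^ 2 + g n ^ 2)/2))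
          - b (n-1) * ((q ^ 2 + g n ^ 2)/2)
        = b 0 / 2 * g n ^ 2
          - (1/2) * (∑ i ∈ Finset.Icc 1 (n-1), (b (n-i-1) - b (n-i)) * g i ^ 2)
          - b (n-1) / 2 * q ^ 2 := by
      intro n hn
      rw [Finset.mem_Icc] at hn
      have hsplit : ∑ i ∈ Finset.Icc 1 (n-1), (b (n-i-1) - b (n-i)) * ((g i ^ 2 + g n ^ 2)/2)
          = (1/2) * (∑ i ∈ Finset.Icc 1 (n-1), (b (n-i-1) - b (n-i)) * g i ^ 2)
            + (∑ i ∈ Finset.Icc 1 (n-1), (b (n-i-1) - b (n-i))) * (g n ^ 2 / 2) := by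
        rw [Finset.mul_sum, Finset.sum_mul, ← Finset.sum_add_distrib]
        exact Finset.sum_congr rfl fun i _ => by ring
      rw [hsplit, hsum1 n hn.1]
      ring
    rw [Finset.sum_congr rfl hE, Finset.sum_sub_distrib, Finset.sum_sub_distrib]
    have h2 : ∑ n ∈ Finset.Icc 1 N,
        (1/2) * (∑ i ∈ Finset.Icc 1 (n-1), (b (n-i-1) - b (n-i)) * g i ^ 2)
        = (1/2) * ∑ i ∈ Finset.Icc 1 N, (b 0 - b (N-i)) * g i ^ 2 := by
      rw [← Finset.mul_sum, hswap]
    have h3 : ∑ n ∈ Finset.Icc 1 N, b (n-1) / 2 * q ^ 2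
        = T ^ (1-α) / (1-α) * (q^2/2) := by
      calc ∑ n ∈ Finset.Icc 1 N, b (n-1) / 2 * q ^ 2
          = (∑ n ∈ Finset.Icc 1 N, b (n-1)) * (q^2/2) := by
            rw [Finset.sum_mul]; exact Finset.sum_congr rfl fun n _ => by ring
        _ = T ^ (1-α) / (1-α) * (q^2/2) := by rw [hsum2]
    rw [h2, h3]
    have hcomb : ∑ n ∈ Finset.Icc 1 N, b 0 / 2 * g n ^ 2
        - (1/2) * ∑ i ∈ Finset.Icc 1 N, (b 0 - b (N-i)) * g i ^ 2
        = ∑ n ∈ Finset.Icc 1 N, b (N-n) / 2 * g n ^ 2 := by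
      rw [Finset.mul_sum, ← Finset.sum_sub_distrib]
      exact Finset.sum_congr rfl fun n _ => by ring
    rw [hcomb]
    congr 1
    have hne : (1:ℝ) - α ≠ 0 := ne_of_gt hβ0
    field_simp
  -- Step C: final bound
  have stepC : T ^ (-α) / 2 * τ * ∑ n ∈ Finset.Icc 1 N, (g n) ^ 2
      ≤ ∑ n ∈ Finset.Icc 1 N, b (N-n) / 2 * g n ^ 2 := by
    rw [Finset.mul_sum]
    apply Finset.sum_le_sum
    intro n hn
    have := hbNn n hn
    have hg := sq_nonneg (g n)
    nlinarith
  calc T ^ (-α) / 2 * τ * ∑ n ∈ Finset.Icc 1 N, (g n) ^ 2 - T ^ (1-α) / (2*(1-α)) * q ^ 2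
      ≤ ∑ n ∈ Finset.Icc 1 N, b (N-n) / 2 * g n ^ 2 - T ^ (1-α) / (2*(1-α)) * q ^ 2 := by
        linarith
    _ = ∑ n ∈ Finset.Icc 1 N,
        (b 0 * g n ^ 2 - (∑ i ∈ Finset.Icc 1 (n-1), (b (n-i-1) - b (n-i)) * ((g i ^ 2 + g n ^ 2)/2))
          - b (n-1) * ((q ^ 2 + g n ^ 2)/2)) := stepB.symm
    _ ≤ _ := stepA
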